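/- In any distributive lattice, if a ≤ b ≤ c ≤ d, then the intersection of the congruences Θ(a,b) and Θ(c,d) is the trivial (identity) congruence. -/

import Mathlib

/-- A lattice congruence on `L`: an equivalence relation compatible with `⊔` and `⊓`. -/
structure LatticeCon' (L : Type*) [Lattice L] where
  r : L → L → Prop
  refl : ∀ x, r x x
  symm : ∀ {x y}, r x y → r y x
  trans : ∀ {x y z}, r x y → r y z → r x z
  sup : ∀ {a b c d}, r a b → r c d → r (a ⊔ c) (b ⊔ d)
  inf : ∀ {a b c d}, r a b → r c d → r (a ⊓ c) (b ⊓ d)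

namespace LatticeCon'
variable {L : Type*} [Lattice L]

instance : PartialOrder (LatticeCon' L) where
  le θ φ := ∀ x y, θ.r x y → φ.r x y
  le_refl θ := fun _ _ h => h
  le_trans θ φ ψ h1 h2 := fun x y h => h2 x y (h1 x y h)
  le_antisymm θ φ h1 h2 := by
    cases θ; cases φ
    simp only [LatticeCon'.mk.injEq]
    funext x y
    exact propext ⟨h1 x y, h2 x y⟩

instance : InfSet (LatticeCon' L) where
  sInf S :=
  { r := fun x y => ∀ θ ∈ S, θ.r x y
    refl := fun x θ _ => θ.refl x
    symm := fun h θ hθ => θ.symm (h θ hθ)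
    trans := fun h1 h2 θ hθ => θ.trans (h1 θ hθ) (h2 θ hθ)
    sup := fun h1 h2 θ hθ => θ.sup (h1 θ hθ) (h2 θ hθ)
    inf := fun h1 h2 θ hθ => θ.inf (h1 θ hθ) (h2 θ hθ) }

instance : CompleteLattice (LatticeCon' L) :=
  completeLatticeOfInf _ (fun _ =>
    ⟨fun θ hθ _ _ h => h θ hθ, fun _ hφ _ _ h θ hθ => hφ hθ _ _ h⟩)

end LatticeCon'

/-- `theta a b` is the principal congruence generated by the pair `(a, b)`. -/
def theta {L : Type*} [Lattice L] (a b : L) : LatticeCon' L :=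
  sInf {θ : LatticeCon' L | θ.r a b}

/-- `thetaPlus a b = Θ⁺(a,b) = Θ(a ⊓ b, a)`, the least congruence collapsing `a` below `b`. -/
def thetaPlus {L : Type*} [Lattice L] (a b : L) : LatticeCon' L :=
  theta (a ⊓ b) a

/-- The concrete congruence `x ≡ y ↔ x ⊓ a = y ⊓ a ∧ x ⊔ b = y ⊔ b`. -/
def thetaConcrete {L : Type*} [DistribLattice L] (a b : L) : LatticeCon' L where
  r x y := x ⊓ a = y ⊓ a ∧ x ⊔ b = y ⊔ b
  refl _ := ⟨rfl, rfl⟩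
  symm h := ⟨h.1.symm, h.2.symm⟩
  trans h1 h2 := ⟨h1.1.trans h2.1, h1.2.trans h2.2⟩
  sup h1 h2 := by
    have key : ∀ x z : L, (x ⊔ z) ⊔ b = (x ⊔ b) ⊔ (z ⊔ b) := fun x z => by
      rw [sup_sup_sup_comm, sup_idem]
    exact ⟨by rw [inf_sup_right, inf_sup_right, h1.1, h2.1],
      by rw [key, key, h1.2, h2.2]⟩
  inf h1 h2 := by
    have key : ∀ x z : L, (x ⊓ z) ⊓ a = (x ⊓ a) ⊓ (z ⊓ a) := fun x z => by
      rw [inf_inf_inf_comm, inf_idem]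
    exact ⟨by rw [key, key, h1.1, h2.1],
      by rw [sup_inf_right, sup_inf_right, h1.2, h2.2]⟩

theorem theta_le_concrete {L : Type*} [DistribLattice L] {a b : L} (hab : a ≤ b) :
    theta a b ≤ thetaConcrete a b := fun x y h =>
  h (thetaConcrete a b) ⟨by simp [inf_eq_right.2 hab], by simp [sup_eq_right.2 hab]⟩

/-- In a distributive lattice, if `a ≤ b ≤ c ≤ d` then `Θ(a,b) ⊓ Θ(c,d)` is trivial. -/
theorem theta_inf_theta_eq_bot {L : Type*} [DistribLattice L] {a b c d : L}
    (hab : a ≤ b) (hbc : b ≤ c) (hcd : c ≤ d) :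
    theta a b ⊓ theta c d = (⊥ : LatticeCon' L) := by
  apply le_antisymm _ bot_le
  intro x y h
  have h1 : (theta a b).r x y := inf_le_left (α := LatticeCon' L) x y h
  have h2 : (theta c d).r x y := inf_le_right (α := LatticeCon' L) x y h
  have e1 := (theta_le_concrete hab x y h1).2
  have e2 := (theta_le_concrete hcd x y h2).1
  have einf : x ⊓ b = y ⊓ b := by
    have : x ⊓ c ⊓ b = y ⊓ c ⊓ b := by rw [e2]
    rwa [inf_assoc, inf_eq_right.2 hbc, inf_assoc, inf_eq_right.2 hbc] at this
  have hxy : x = y := eq_of_inf_eq_sup_eq (einf.trans rfl) e1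
  subst hxy
  intro θ _
  exact θ.refl x
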